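/- Let $G_0$ and $G_0'$ be probability measures on $\mathbb{R}$ and let $q : \mathbb{R} \to \mathbb{R}^d$ be measurable with components nondegenerate under $G_0$ (for every nonzero $c \in \mathbb{R}^d$, the function $y \mapsto c^{\top} q(y)$ is not $G_0$-almost-everywhere equal to a constant). Assume the zero-mean identifiability constraints $\int q\, dG_0 = 0$ and $\int q\, dG_0' = 0$. Let $\beta, \beta' \in \mathbb{R}^d$ be such that $\int e^{\beta''^{\top} q(y)}\|q(y)\|^2\, dG_0(y) < \infty$ and $\int e^{\beta''^{\top} q(y)}\, dG_0(y) < \infty$ for all $\beta''$ in an open convex set containing the segment between $\beta$ and $\beta'$, and define the normalizing constants $\alpha = -\log \int e^{\beta^{\top} q(y)}\, dG_0(y)$ and $\alpha' = -\log \int e^{\beta'^{\top} q(y)}\, dG_0'(y)$. If the exponentially tilted measures coincide, i.e. $e^{\alpha + \beta^{\top} q(y)}\, dG_0(y) = e^{\alpha' + \beta'^{\top} q(y)}\, dG_0'(y)$ as measures on $\mathbb{R}$, then $\beta = \beta'$ and $G_0 = G_0'$. -/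

import Mathlib

open MeasureTheory Real
open scoped InnerProductSpace

/-- The exponentially tilted measure `e^{α + β^⊤ q(y)} dG(y)`. -/
noncomputable def drmTilt {d : ℕ} (G : Measure ℝ) (q : ℝ → EuclideanSpace ℝ (Fin d))
    (α : ℝ) (β : EuclideanSpace ℝ (Fin d)) : Measure ℝ :=
  G.withDensity fun y => ENNReal.ofReal (Real.exp (α + ⟪β, q y⟫_ℝ))

/-- **Identifiability of the density ratio model** (Theorem 1 of the paper).
Under the zero-mean constraint on the baseline distribution, if two exponentially
tilted measures coincide then the parameters and the baseline distributions coincide. -/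
theorem drm_identifiable {d : ℕ}
    (G₀ G₀' : Measure ℝ) [IsProbabilityMeasure G₀] [IsProbabilityMeasure G₀']
    (q : ℝ → EuclideanSpace ℝ (Fin d)) (hq : Measurable q)
    -- nondegeneracy of the components of `q` under `G₀`
    (hnd : ∀ c : EuclideanSpace ℝ (Fin d), c ≠ 0 → ¬ ∃ r : ℝ, ∀ᵐ y ∂G₀, ⟪c, q y⟫_ℝ = r)
    -- zero-mean identifiability constraints
    (hqi : Integrable q G₀) (hqi' : Integrable q G₀')
    (h0 : ∫ y, q y ∂G₀ = 0) (h0' : ∫ y, q y ∂G₀' = 0)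
    (β β' : EuclideanSpace ℝ (Fin d))
    -- integrability on an open convex set containing the segment between `β` and `β'`
    (U : Set (EuclideanSpace ℝ (Fin d)))
    (hU : IsOpen U) (hUc : Convex ℝ U) (hseg : segment ℝ β β' ⊆ U)
    (hm2 : ∀ β'' ∈ U, Integrable (fun y => Real.exp (⟪β'', q y⟫_ℝ) * ‖q y‖ ^ 2) G₀)
    (hm0 : ∀ β'' ∈ U, Integrable (fun y => Real.exp (⟪β'', q y⟫_ℝ)) G₀)
    -- the normalizing constants
    (α α' : ℝ)
    (hα : α = -Real.log (∫ y, Real.exp (⟪β, q y⟫_ℝ) ∂G₀))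
    (hα' : α' = -Real.log (∫ y, Real.exp (⟪β', q y⟫_ℝ) ∂G₀'))
    -- the tilted measures coincide
    (heq : drmTilt G₀ q α β = drmTilt G₀' q α' β') :
    β = β' ∧ G₀ = G₀' := by
  classical
  set γ : EuclideanSpace ℝ (Fin d) := β - β' with hγdef
  set c : ℝ := α - α' with hcdef
  set f : ℝ → ℝ := fun y => ⟪γ, q y⟫_ℝ with hfdef
  set w : ℝ → ℝ := fun y => Real.exp (c + f y) with hwdef
  have hmq : ∀ v : EuclideanSpace ℝ (Fin d), Measurable fun y => ⟪v, q y⟫_ℝ :=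
    fun v => ((innerSL ℝ v).continuous.measurable.comp hq)
  have hφ : Measurable fun y => ENNReal.ofReal (Real.exp (α + ⟪β, q y⟫_ℝ)) :=
    ((measurable_const.add (hmq β)).exp).ennreal_ofReal
  have hφ' : Measurable fun y => ENNReal.ofReal (Real.exp (α' + ⟪β', q y⟫_ℝ)) :=
    ((measurable_const.add (hmq β')).exp).ennreal_ofReal
  have hwm : Measurable w := (measurable_const.add (hmq γ)).exp
  -- Step 1 : G₀' = G₀.withDensity (ofReal ∘ w)
  have hG : G₀' = G₀.withDensity (fun y => ENNReal.ofReal (w y)) := by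
    have h1 : ((G₀'.withDensity fun y => ENNReal.ofReal (Real.exp (α' + ⟪β', q y⟫_ℝ))).withDensity
        fun y => (ENNReal.ofReal (Real.exp (α' + ⟪β', q y⟫_ℝ)))⁻¹) = G₀' := by
      refine withDensity_inv_same hφ' ?_ ?_
      · exact Filter.Eventually.of_forall fun y => by
          simp [ENNReal.ofReal_eq_zero, not_le, Real.exp_pos]
      · exact Filter.Eventually.of_forall fun y => ENNReal.ofReal_ne_top
    have h2 : ((G₀.withDensity fun y => ENNReal.ofReal (Real.exp (α + ⟪β, q y⟫_ℝ))).withDensity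
        fun y => (ENNReal.ofReal (Real.exp (α' + ⟪β', q y⟫_ℝ)))⁻¹)
        = G₀.withDensity (fun y => ENNReal.ofReal (w y)) := by
      rw [← withDensity_mul _ hφ (g := fun y => (ENNReal.ofReal (Real.exp (α' + ⟪β', q y⟫_ℝ)))⁻¹) hφ'.inv]
      congr 1
      funext y
      rw [Pi.mul_apply, ← ENNReal.ofReal_inv_of_pos (Real.exp_pos _),
        ← ENNReal.ofReal_mul (Real.exp_pos _).le, ← Real.exp_neg, ← Real.exp_add]
      congr 1
      simp only [hwdef, hfdef, hcdef, hγdef, inner_sub_left]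
      ring
    have h3 := congrArg (fun μ : Measure ℝ =>
      μ.withDensity fun y => (ENNReal.ofReal (Real.exp (α' + ⟪β', q y⟫_ℝ)))⁻¹) heq
    simp only [drmTilt] at h3
    rw [h1, h2] at h3
    exact h3.symm
  -- rewrite density with toNNReal to use smul lemmas
  have hGnn : G₀' = G₀.withDensity (fun y => ((w y).toNNReal : ENNReal)) := hG
  have hwnn : Measurable fun y => (w y).toNNReal := hwm.real_toNNReal
  -- Step 2 : transferred zero-mean constraint
  have hsmul_int : Integrable (fun y => w y • q y) G₀ := by
    have := (integrable_withDensity_iff_integrable_smul hwnn).mp (hGnn ▸ hqi')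
    refine this.congr (Filter.Eventually.of_forall fun y => ?_)
    show (w y).toNNReal • q y = w y • q y
    rw [NNReal.smul_def, Real.coe_toNNReal _ (Real.exp_pos _).le]
  have hmean' : ∫ y, w y • q y ∂G₀ = 0 := by
    have h4 : ∫ y, q y ∂G₀' = ∫ y, (w y).toNNReal • q y ∂G₀ := by
      rw [hGnn]; exact integral_withDensity_eq_integral_smul hwnn q
    have h5 : ∫ y, (w y).toNNReal • q y ∂G₀ = ∫ y, w y • q y ∂G₀ := by
      congr 1; funext y
      rw [NNReal.smul_def, Real.coe_toNNReal _ (Real.exp_pos _).le]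
    rw [← h5, ← h4, h0']
  -- Step 3 : scalar consequences via inner product with γ
  have hf_int : Integrable f G₀ := (innerSL ℝ γ).integrable_comp hqi
  have hf_mean : ∫ y, f y ∂G₀ = 0 := by
    have := (innerSL ℝ γ).integral_comp_comm hqi
    simp only [hfdef] at this ⊢
    rw [show (fun y => ⟪γ, q y⟫_ℝ) = fun y => (innerSL ℝ γ) (q y) from rfl, this, h0]
    simp
  have hwf_int : Integrable (fun y => w y * f y) G₀ := by
    have := (innerSL ℝ γ).integrable_comp hsmul_int
    refine this.congr (Filter.Eventually.of_forall fun y => ?_)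
    show ⟪γ, w y • q y⟫_ℝ = w y * f y
    rw [real_inner_smul_right]
  have hwf_mean : ∫ y, w y * f y ∂G₀ = 0 := by
    have h6 := (innerSL ℝ γ).integral_comp_comm hsmul_int
    rw [hmean'] at h6
    have h7 : (fun y => (innerSL ℝ γ) (w y • q y)) = fun y => w y * f y := by
      funext y; simp [real_inner_smul_right, hfdef]
    rw [h7] at h6
    simpa using h6
  -- Step 4 : ∫ exp(f) f = 0
  have hef_int : Integrable (fun y => Real.exp (f y) * f y) G₀ := by
    have := hwf_int.const_mul (Real.exp (-c))
    refine this.congr (Filter.Eventually.of_forall fun y => ?_)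
    show Real.exp (-c) * (w y * f y) = Real.exp (f y) * f y
    simp only [hwdef]
    rw [← mul_assoc, ← Real.exp_add, show -c + (c + f y) = f y by ring]
  have hef_mean : ∫ y, Real.exp (f y) * f y ∂G₀ = 0 := by
    have h8 : ∀ y, w y * f y = Real.exp c * (Real.exp (f y) * f y) := by
      intro y; simp only [hwdef, Real.exp_add]; ring
    rw [show (fun y => Real.exp (f y) * f y)
        = fun y => Real.exp (-c) * (w y * f y) from funext fun y => by
          rw [h8 y, ← mul_assoc, ← Real.exp_add]; simp,
      integral_const_mul, hwf_mean, mul_zero]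
  -- Step 5 : the nonneg integrand
  have hg_nonneg : ∀ y, 0 ≤ f y * (Real.exp (f y) - 1) := by
    intro y
    rcases le_or_gt 0 (f y) with h | h
    · exact mul_nonneg h (sub_nonneg.mpr (Real.one_le_exp h))
    · have h1 : Real.exp (f y) - 1 ≤ 0 := sub_nonpos.mpr (Real.exp_le_one_iff.mpr h.le)
      nlinarith
  have hg_int : Integrable (fun y => f y * (Real.exp (f y) - 1)) G₀ := by
    have := hef_int.sub hf_int
    refine this.congr (Filter.Eventually.of_forall fun y => ?_)
    simp only [Pi.sub_apply]
    ring
  have hg_mean : ∫ y, f y * (Real.exp (f y) - 1) ∂G₀ = 0 := by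
    rw [show (fun y => f y * (Real.exp (f y) - 1))
        = fun y => Real.exp (f y) * f y - f y from funext fun y => by ring,
      integral_sub hef_int hf_int, hef_mean, hf_mean, sub_zero]
  have hf_ae : ∀ᵐ y ∂G₀, f y = 0 := by
    have := (integral_eq_zero_iff_of_nonneg hg_nonneg hg_int).mp hg_mean
    filter_upwards [this] with y hy
    simp only [Pi.zero_apply] at hy
    rcases mul_eq_zero.mp hy with h | h
    · exact h
    · have h2 : Real.exp (f y) = Real.exp 0 := by rw [Real.exp_zero]; linarith
      exact Real.exp_eq_exp.mp h2
  -- Step 6 : conclude γ = 0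
  have hγ0 : γ = 0 := by
    by_contra h
    exact hnd γ h ⟨0, hf_ae⟩
  have hββ' : β = β' := sub_eq_zero.mp hγ0
  refine ⟨hββ', ?_⟩
  -- Step 7 : constant density must be one
  have hwconst : ∀ y, w y = Real.exp c := by
    intro y; simp [hwdef, hfdef, hγ0]
  have hGc : G₀' = (ENNReal.ofReal (Real.exp c)) • G₀ := by
    rw [hG]
    simp_rw [hwconst]
    exact withDensity_const _
  have huniv : (1 : ENNReal) = ENNReal.ofReal (Real.exp c) * 1 := by
    have := congrArg (fun μ : Measure ℝ => μ Set.univ) hGc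
    simpa [Measure.smul_apply, smul_eq_mul] using this
  have hc1 : ENNReal.ofReal (Real.exp c) = 1 := by
    rw [mul_one] at huniv; exact huniv.symm
  rw [hGc, hc1, one_smul]
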